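/- Let N, K, l ∈ ℕ with l ≤ N − 1 and l + 1 ≤ K. Let c : {0,…,K} → ℂ with every c_k ≠ 0, with Σ_{k even} |c_k|² = Σ_{k odd} |c_k|² = 1, and with Σ_{k=0}^{K} (−1)^k k^{l'} |c_k|² = 0 for every l' ∈ {0,…,l}. In ℂ^{KN+1} set u_0 = Σ_{k even} c_k e_{kN}, u_1 = Σ_{k odd} c_k e_{kN}, P_C = u_0 u_0^† + u_1 u_1^†, let E = {A^m D^j : m + 2j ≤ l} and V = span_ℂ{E P_C : E ∈ E} ⊆ M_{KN+1}(ℂ). Assume the exact Knill–Laflamme conditions hold: u_0^† E_1^† E_2 u_0 = u_1^† E_1^† E_2 u_1 and u_0^† E_1^† E_2 u_1 = 0 for all E_1, E_2 ∈ E. Let α ∈ ℂ with α ≠ 0, set ψ = u_0 + α u_1 and ψ' = conj(α) u_0 − u_1, and assume the vectors {E ψ : E ∈ E} are linearly independent. Suppose H ∈ M_{KN+1}(ℂ) is Hermitian, satisfies [H, E] ∈ V for every E ∈ V, and satisfies H ψ = λ ψ and H ψ' = λ' ψ' with λ ≠ λ'. Then there exist at least ⌊l/2⌋ + 1 distinct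 positive odd integers u such that H_{p,q} ≠ 0 for some position (p,q) with |p − q| = uN. -/

import Mathlib

open Finset Matrix Polynomial

/-- Reduce a sum over `Fin n` against a vector supported on positions `k*N`. -/
lemma sum_reduce_aux {n N : ℕ} (Tf : Finset ℕ) (e : ℕ → Fin n)
    (he : ∀ k ∈ Tf, ∀ q : Fin n, ((q : ℕ) = k * N ↔ q = e k))
    (f : Fin n → ℂ) (g : ℕ → ℂ) :
    (∑ q : Fin n, f q * ∑ k ∈ Tf, if (q : ℕ) = k * N then g k else 0)
      = ∑ k ∈ Tf, f (e k) * g k := by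
  simp_rw [Finset.mul_sum]
  rw [Finset.sum_comm]
  refine Finset.sum_congr rfl fun k hk => ?_
  have h1 : ∀ q : Fin n, (f q * if (q : ℕ) = k * N then g k else 0)
      = if q = e k then f q * g k else 0 := by
    intro q
    by_cases h : (q : ℕ) = k * N
    · rw [if_pos h, if_pos ((he k hk q).mp h)]
    · rw [if_neg h, if_neg (fun hh => h ((he k hk q).mpr hh)), mul_zero]
  simp_rw [h1]
  rw [Finset.sum_ite_eq' Finset.univ (e k) (fun q => f q * g k), if_pos (Finset.mem_univ _)]

/-- A nonzero "measure" with an isolated atom cannot have `J+1` vanishing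
moments if it is supported on at most `J` further points. -/
lemma vand_aux {J : ℕ} (T : Finset ℕ) (x : ℕ → ℂ) (w : ℕ → ℂ) (κ y : ℂ)
    (hκ : κ ≠ 0) (hy : ∀ k ∈ T, x k ≠ y) (hcard : T.card ≤ J)
    (hmomall : ∀ j ≤ J, ∑ k ∈ T, w k * x k ^ j = κ * y ^ j) : False := by
  set p : ℂ[X] := ∏ k ∈ T, (X - C (x k)) with hp
  have hdeg : p.natDegree ≤ J := by
    rw [hp, Polynomial.natDegree_prod _ _ (fun k _ => X_sub_C_ne_zero (x k))]
    simpa [Polynomial.natDegree_X_sub_C] using hcard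
  have key : ∑ k ∈ T, w k * p.eval (x k) = κ * p.eval y := by
    have hev : ∀ z : ℂ, p.eval z = ∑ j ∈ range (J + 1), p.coeff j * z ^ j :=
      fun z => Polynomial.eval_eq_sum_range' (Nat.lt_succ_of_le hdeg) z
    calc ∑ k ∈ T, w k * p.eval (x k)
        = ∑ k ∈ T, ∑ j ∈ range (J + 1), p.coeff j * (w k * x k ^ j) := by
          refine Finset.sum_congr rfl fun k _ => ?_
          rw [hev, Finset.mul_sum]
          exact Finset.sum_congr rfl fun j _ => by ring
      _ = ∑ j ∈ range (J + 1), p.coeff j * ∑ k ∈ T, w k * x k ^ j := by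
          rw [Finset.sum_comm]
          exact Finset.sum_congr rfl fun j _ => by rw [Finset.mul_sum]
      _ = ∑ j ∈ range (J + 1), p.coeff j * (κ * y ^ j) := by
          refine Finset.sum_congr rfl fun j hj => ?_
          rw [hmomall j (Nat.lt_succ_iff.mp (Finset.mem_range.mp hj))]
      _ = κ * p.eval y := by
          rw [hev, Finset.mul_sum]
          exact Finset.sum_congr rfl fun j _ => by ring
  have hL : ∑ k ∈ T, w k * p.eval (x k) = 0 := by
    refine Finset.sum_eq_zero fun k hk => ?_
    have : p.eval (x k) = 0 := by
      rw [hp, Polynomial.eval_prod]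
      exact Finset.prod_eq_zero hk (by simp)
    rw [this, mul_zero]
  have hR : p.eval y ≠ 0 := by
    rw [hp, Polynomial.eval_prod]
    refine Finset.prod_ne_zero_iff.mpr fun k hk => ?_
    simpa using sub_ne_zero.mpr (Ne.symm (hy k hk))
  rw [hL] at key
  exact hR (by
    rcases mul_eq_zero.mp key.symm with h | h
    · exact absurd h hκ
    · exact h)


lemma main_aux (N K l : ℕ) (hN : 0 < N)
    (c : ℕ → ℂ)
    (A D P H : Matrix (Fin (K * N + 1)) (Fin (K * N + 1)) ℂ)
    (hA : ∀ p q : Fin (K * N + 1),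
      A p q = if (p : ℕ) + 1 = (q : ℕ) then (Real.sqrt (q : ℕ) : ℂ) else 0)
    (hD : D = Matrix.diagonal (fun n : Fin (K * N + 1) => ((n : ℕ) : ℂ)))
    (Eset : Set (Matrix (Fin (K * N + 1)) (Fin (K * N + 1)) ℂ))
    (hEset : Eset = {E | ∃ m j : ℕ, m + 2 * j ≤ l ∧ E = A ^ m * D ^ j})
    (V : Submodule ℂ (Matrix (Fin (K * N + 1)) (Fin (K * N + 1)) ℂ))
    (hV : V = Submodule.span ℂ ((fun E => E * P) '' Eset))
    (hET : ∀ E ∈ V, H * E - E * H ∈ V)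
    (v : Fin (K * N + 1) → ℂ) (Tf : Finset ℕ)
    (hTf : ∀ k ∈ Tf, k < K ∧ (K - k) % 2 = 1)
    (hv : ∀ q : Fin (K * N + 1), v q = ∑ k ∈ Tf, if (q : ℕ) = k * N then c k else 0)
    (hPv : P.mulVec v = v)
    (κ : ℂ) (hκ : κ ≠ 0)
    (hPHv : P.mulVec (H.mulVec v) ⟨K * N, by omega⟩ = κ) :
    ∃ S : Finset ℕ, l / 2 + 1 ≤ S.card ∧
      ∀ u ∈ S, Odd u ∧ 0 < u ∧
        ∃ p q : Fin (K * N + 1),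
          ((p : ℤ) - (q : ℤ)).natAbs = u * N ∧ H p q ≠ 0 := by
  classical
  have hlast : K * N < K * N + 1 := by omega
  set lastI : Fin (K * N + 1) := ⟨K * N, hlast⟩ with hlastI
  have hlastval : (lastI : ℕ) = K * N := rfl
  set e : ℕ → Fin (K * N + 1) := fun k => if h : k * N < (K * N + 1) then ⟨k * N, h⟩ else lastI with he'
  have heval : ∀ k, k ≤ K → ((e k : ℕ) = k * N) := by
    intro k hk
    have : k * N < (K * N + 1) := by
      have := Nat.mul_le_mul_right N hk
      omega
    simp [he', this, Nat.le_of_lt_succ this]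
  have he : ∀ k ∈ Tf, ∀ q : Fin (K * N + 1), ((q : ℕ) = k * N ↔ q = e k) := by
    intro k hk q
    rw [Fin.ext_iff, heval k (le_of_lt (hTf k hk).1)]
  have hkNlt : ∀ k ∈ Tf, k * N < K * N := fun k hk =>
    Nat.mul_lt_mul_of_lt_of_le (hTf k hk).1 le_rfl hN
  -- v vanishes at the top position
  have hvlast : v lastI = 0 := by
    rw [hv]
    refine Finset.sum_eq_zero fun k hk => ?_
    have h2 : (lastI : ℕ) ≠ k * N := by
      have := hkNlt k hk; rw [hlastval]; omega
    simp [h2]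
  -- powers of D
  have hDpow : ∀ j : ℕ, D ^ j = Matrix.diagonal (fun q : Fin (K * N + 1) => ((q : ℕ) : ℂ) ^ j) := by
    intro j
    rw [hD]
    induction j with
    | zero => simp
    | succ m ih => rw [pow_succ, ih, Matrix.diagonal_mul_diagonal]; simp [pow_succ]
  -- top row of A^m is zero for m ≥ 1
  have hArow : ∀ r : Fin (K * N + 1), A lastI r = 0 := by
    intro r
    rw [hA]
    have h2 : (lastI : ℕ) + 1 ≠ (r : ℕ) := by
      have := r.isLt; rw [hlastval]; omega
    simp [h2]
  have hApow : ∀ m : ℕ, 0 < m → ∀ r : Fin (K * N + 1), (A ^ m) lastI r = 0 := by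
    intro m hm r
    obtain ⟨m', rfl⟩ := Nat.exists_eq_add_of_lt hm
    rw [pow_succ', Matrix.mul_apply]
    simp only [zero_add]
    exact Finset.sum_eq_zero fun s _ => by rw [hArow s, zero_mul]
  -- generators of V kill v at the top position
  have hgen : ∀ E ∈ Eset, ((E * P).mulVec v) lastI = 0 := by
    intro E hE
    rw [hEset] at hE
    obtain ⟨m, j, hmj, rfl⟩ := hE
    rw [← Matrix.mulVec_mulVec, hPv, ← Matrix.mulVec_mulVec]
    rcases Nat.eq_zero_or_pos m with hm | hm
    · subst hm
      rw [pow_zero, Matrix.one_mulVec, hDpow, Matrix.mulVec_diagonal, hvlast, mul_zero]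
    · show ((A ^ m).mulVec ((D ^ j).mulVec v)) lastI = 0
      rw [Matrix.mulVec, dotProduct]
      exact Finset.sum_eq_zero fun q _ => by rw [hApow m hm q, zero_mul]
  -- the linear functional X ↦ (X v)(lastI) kills V
  have hVkill : ∀ X ∈ V, (X.mulVec v) lastI = 0 := by
    have φdef : ∃ φ : Matrix (Fin (K * N + 1)) (Fin (K * N + 1)) ℂ →ₗ[ℂ] ℂ,
        ∀ X, φ X = (X.mulVec v) lastI := by
      refine ⟨{ toFun := fun X => (X.mulVec v) lastI, map_add' := ?_, map_smul' := ?_ }, fun X => rfl⟩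
      · intro X Y
        show ((X + Y).mulVec v) lastI = (X.mulVec v) lastI + (Y.mulVec v) lastI
        rw [Matrix.add_mulVec]; rfl
      · intro a X
        show ((a • X).mulVec v) lastI = a • (X.mulVec v) lastI
        rw [Matrix.smul_mulVec]; rfl
    obtain ⟨φ, hφ⟩ := φdef
    intro X hX
    have hsub : V ≤ LinearMap.ker φ := by
      rw [hV, Submodule.span_le]
      rintro x ⟨E, hE, rfl⟩
      simp only [SetLike.mem_coe, LinearMap.mem_ker, hφ]
      exact hgen E hE
    have := hsub hX
    rw [LinearMap.mem_ker, hφ] at this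
    exact this
  -- the moment identities
  have hmoment : ∀ j ≤ l / 2,
      ∑ k ∈ Tf, (H lastI (e k) * c k) * ((k * N : ℕ) : ℂ) ^ j
        = κ * ((K * N : ℕ) : ℂ) ^ j := by
    intro j hj
    have hDPV : D ^ j * P ∈ V := by
      rw [hV]
      refine Submodule.subset_span ⟨D ^ j, ?_, rfl⟩
      rw [hEset]
      exact ⟨0, j, by omega, by rw [pow_zero, one_mul]⟩
    have hcomm := hVkill _ (hET _ hDPV)
    rw [Matrix.sub_mulVec] at hcomm
    have heq : ((H * (D ^ j * P)).mulVec v) lastI = (((D ^ j * P) * H).mulVec v) lastI := by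
      rw [Pi.sub_apply] at hcomm
      exact sub_eq_zero.mp hcomm
    -- LHS
    have hL : ((H * (D ^ j * P)).mulVec v) lastI
        = ∑ k ∈ Tf, (H lastI (e k) * ((k * N : ℕ) : ℂ) ^ j) * c k := by
      rw [← Matrix.mulVec_mulVec, ← Matrix.mulVec_mulVec, hPv]
      have h1 : ((H.mulVec ((D ^ j).mulVec v)) lastI)
          = ∑ q : Fin (K * N + 1), (H lastI q * ((q : ℕ) : ℂ) ^ j) * v q := by
        rw [Matrix.mulVec, dotProduct]
        refine Finset.sum_congr rfl fun q _ => ?_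
        rw [hDpow, Matrix.mulVec_diagonal]
        ring
      rw [h1]
      have h2 := sum_reduce_aux Tf e he (fun q => H lastI q * ((q : ℕ) : ℂ) ^ j) c
      simp_rw [← hv] at h2
      rw [h2]
      refine Finset.sum_congr rfl fun k hk => ?_
      rw [heval k (le_of_lt (hTf k hk).1)]
    -- RHS
    have hR : (((D ^ j * P) * H).mulVec v) lastI = ((K * N : ℕ) : ℂ) ^ j * κ := by
      rw [← Matrix.mulVec_mulVec, ← Matrix.mulVec_mulVec, hDpow, Matrix.mulVec_diagonal, hPHv]
    rw [hL, hR] at heq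
    calc ∑ k ∈ Tf, H lastI (e k) * c k * ((k * N : ℕ) : ℂ) ^ j
        = ∑ k ∈ Tf, H lastI (e k) * ((k * N : ℕ) : ℂ) ^ j * c k :=
          Finset.sum_congr rfl fun k _ => by ring
      _ = ((K * N : ℕ) : ℂ) ^ j * κ := heq
      _ = κ * ((K * N : ℕ) : ℂ) ^ j := mul_comm _ _
  -- counting
  set T : Finset ℕ := Tf.filter (fun k => H lastI (e k) ≠ 0) with hT
  have hTsub : ∀ k ∈ T, k ∈ Tf := fun k hk => (Finset.mem_filter.mp hk).1
  have hmomT : ∀ j ≤ l / 2,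
      ∑ k ∈ T, (H lastI (e k) * c k) * ((k * N : ℕ) : ℂ) ^ j
        = κ * ((K * N : ℕ) : ℂ) ^ j := by
    intro j hj
    rw [← hmoment j hj, hT]
    exact Finset.sum_filter_of_ne fun k hk hne h0 => hne (by rw [h0, zero_mul, zero_mul])
  have hcard : l / 2 + 1 ≤ T.card := by
    by_contra hcon
    push_neg at hcon
    refine vand_aux T (fun k => ((k * N : ℕ) : ℂ)) (fun k => H lastI (e k) * c k)
      κ ((K * N : ℕ) : ℂ) hκ ?_ (by omega) (fun j hj => hmomT j hj)
    intro k hk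
    have h1 := hkNlt k (hTsub k hk)
    exact fun hcast => (by omega : k * N ≠ K * N) (Nat.cast_injective hcast)
  refine ⟨T.image (fun k => K - k), ?_, ?_⟩
  · rw [Finset.card_image_of_injOn]
    · exact hcard
    · intro a ha b hb hab
      have h1 := (hTf a (hTsub a ha)).1
      have h2 := (hTf b (hTsub b hb)).1
      simp only at hab
      omega
  · intro u hu
    obtain ⟨k, hk, rfl⟩ := Finset.mem_image.mp hu
    obtain ⟨hkK, hkpar⟩ := hTf k (hTsub k hk)
    refine ⟨Nat.odd_iff.mpr hkpar, by omega, lastI, e k, ?_, (Finset.mem_filter.mp hk).2⟩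
    have h1 : k * N ≤ K * N := le_of_lt (hkNlt k (hTsub k hk))
    have h2 : (K - k) * N = K * N - k * N := Nat.sub_mul K k N
    rw [heval k (le_of_lt hkK)]
    have : ((lastI : ℤ) - (k * N : ℕ)) = ((K * N - k * N : ℕ) : ℤ) := by
      rw [Nat.cast_sub h1]
    rw [this, Int.natAbs_natCast]
    omega


lemma point_aux {Nn : ℕ} (hN : Nn ≠ 0) (Tf : Finset ℕ) (g : ℕ → ℂ) (k : ℕ) :
    (∑ k' ∈ Tf, if k * Nn = k' * Nn then g k' else 0) = if k ∈ Tf then g k else 0 := by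
  have h1 : ∀ k' : ℕ, (k * Nn = k' * Nn) ↔ (k' = k) := fun k' => by
    constructor
    · intro h
      exact (Nat.eq_of_mul_eq_mul_right (Nat.pos_of_ne_zero hN) h).symm
    · intro h
      rw [h]
  simp_rw [h1]
  exact Finset.sum_ite_eq' Tf k g


/-- Theorem 3 of the paper (for hard-cutoff codes): any
Hermitian Hamiltonian `H` that is error-transparent (Definition 3:
`[H,E] ∈ V` for all `E ∈ V`, with `V` the span of the errors
`E = {A^m D^j : m + 2j ≤ l}` restricted to the codespace) and generates a
continuous amplitude-mixing gate (fixing logical eigenvectors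
`ψ = u0 + α u1`, `ψ' = conj(α) u0 − u1` with `α ≠ 0` and distinct
eigenvalues) for an exactly `E_l`-correcting order-`N` rotation-symmetric
code must have nonzero entries at positions `|p − q| = uN` for at least
`⌊l/2⌋ + 1` distinct positive odd integers `u`, i.e. it requires at least
`⌊l/2⌋ + 1` odd orders of generalized squeezing. -/
theorem stmt_10 (N K l : ℕ)
    (hlN : (l : ℤ) ≤ (N : ℤ) - 1) (hlK : l + 1 ≤ K)
    (c : ℕ → ℂ) (hc : ∀ k ≤ K, c k ≠ 0)
    (hnorm0 : ∑ k ∈ (range (K + 1)).filter (fun k => Even k), ‖c k‖ ^ 2 = 1)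
    (hnorm1 : ∑ k ∈ (range (K + 1)).filter (fun k => Odd k), ‖c k‖ ^ 2 = 1)
    (hmom : ∀ l' ≤ l, ∑ k ∈ range (K + 1),
      (-1 : ℝ) ^ k * ((k : ℝ)) ^ l' * ‖c k‖ ^ 2 = 0)
    (A : Matrix (Fin (K * N + 1)) (Fin (K * N + 1)) ℂ)
    (hA : ∀ p q : Fin (K * N + 1),
      A p q = if (p : ℕ) + 1 = (q : ℕ) then (Real.sqrt (q : ℕ) : ℂ) else 0)
    (D : Matrix (Fin (K * N + 1)) (Fin (K * N + 1)) ℂ)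
    (hD : D = Matrix.diagonal (fun n : Fin (K * N + 1) => ((n : ℕ) : ℂ)))
    (u0 u1 : Fin (K * N + 1) → ℂ)
    (hu0 : ∀ n : Fin (K * N + 1), u0 n =
      ∑ k ∈ (range (K + 1)).filter (fun k => Even k),
        if (n : ℕ) = k * N then c k else 0)
    (hu1 : ∀ n : Fin (K * N + 1), u1 n =
      ∑ k ∈ (range (K + 1)).filter (fun k => Odd k),
        if (n : ℕ) = k * N then c k else 0)
    (P : Matrix (Fin (K * N + 1)) (Fin (K * N + 1)) ℂ)
    (hP : P = Matrix.vecMulVec u0 (star u0) + Matrix.vecMulVec u1 (star u1))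
    (Eset : Set (Matrix (Fin (K * N + 1)) (Fin (K * N + 1)) ℂ))
    (hEset : Eset = {E | ∃ m j : ℕ, m + 2 * j ≤ l ∧ E = A ^ m * D ^ j})
    (V : Submodule ℂ (Matrix (Fin (K * N + 1)) (Fin (K * N + 1)) ℂ))
    (hV : V = Submodule.span ℂ ((fun E => E * P) '' Eset))
    (hKL : ∀ E₁ ∈ Eset, ∀ E₂ ∈ Eset,
      star u0 ⬝ᵥ (E₁ᴴ * E₂).mulVec u0 = star u1 ⬝ᵥ (E₁ᴴ * E₂).mulVec u1 ∧
      star u0 ⬝ᵥ (E₁ᴴ * E₂).mulVec u1 = 0)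
    (α : ℂ) (hα : α ≠ 0)
    (ψ ψ' : Fin (K * N + 1) → ℂ)
    (hψ : ψ = u0 + α • u1)
    (hψ' : ψ' = (starRingEnd ℂ) α • u0 - u1)
    (hLI : LinearIndependent ℂ
      (fun E : Eset => (E : Matrix (Fin (K * N + 1)) (Fin (K * N + 1)) ℂ).mulVec ψ))
    (H : Matrix (Fin (K * N + 1)) (Fin (K * N + 1)) ℂ)
    (hHerm : H.IsHermitian)
    (hET : ∀ E ∈ V, H * E - E * H ∈ V)
    (lam lam' : ℂ) (hll : lam ≠ lam')
    (hHψ : H.mulVec ψ = lam • ψ) (hHψ' : H.mulVec ψ' = lam' • ψ') :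
    ∃ S : Finset ℕ, l / 2 + 1 ≤ S.card ∧
      ∀ u ∈ S, Odd u ∧ 0 < u ∧
        ∃ p q : Fin (K * N + 1),
          ((p : ℤ) - (q : ℤ)).natAbs = u * N ∧ H p q ≠ 0 := by
  classical
  have hN : 0 < N := by omega
  have hNne : N ≠ 0 := by omega
  have hlast : K * N < K * N + 1 := by omega
  set lastI : Fin (K * N + 1) := ⟨K * N, hlast⟩ with hlastI
  have hlastval : (lastI : ℕ) = K * N := rfl
  set e : ℕ → Fin (K * N + 1) := fun k => if h : k * N < K * N + 1 then ⟨k * N, h⟩ else lastI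
    with he'
  have heval : ∀ k, k ≤ K → ((e k : ℕ) = k * N) := by
    intro k hk
    have : k * N < K * N + 1 := by
      have := Nat.mul_le_mul_right N hk
      omega
    simp [he', this, Nat.le_of_lt_succ this]
  set T0 : Finset ℕ := (range (K + 1)).filter (fun k => Even k) with hT0
  set T1 : Finset ℕ := (range (K + 1)).filter (fun k => Odd k) with hT1
  have hT0sub : ∀ k ∈ T0, k ≤ K := fun k hk => by
    have := Finset.mem_range.mp (Finset.mem_filter.mp hk).1; omega
  have hT1sub : ∀ k ∈ T1, k ≤ K := fun k hk => by
    have := Finset.mem_range.mp (Finset.mem_filter.mp hk).1; omega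
  have he0 : ∀ k ∈ T0, ∀ q : Fin (K * N + 1), ((q : ℕ) = k * N ↔ q = e k) := by
    intro k hk q
    rw [Fin.ext_iff, heval k (hT0sub k hk)]
  have he1 : ∀ k ∈ T1, ∀ q : Fin (K * N + 1), ((q : ℕ) = k * N ↔ q = e k) := by
    intro k hk q
    rw [Fin.ext_iff, heval k (hT1sub k hk)]
  -- point evaluations of u0 and u1
  have hu0e : ∀ k, k ≤ K → u0 (e k) = if k ∈ T0 then c k else 0 := by
    intro k hk
    rw [hu0 (e k)]
    simp only [heval k hk]
    exact point_aux hNne T0 c k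
  have hu1e : ∀ k, k ≤ K → u1 (e k) = if k ∈ T1 then c k else 0 := by
    intro k hk
    rw [hu1 (e k)]
    simp only [heval k hk]
    exact point_aux hNne T1 c k
  -- dot products
  have hdot0 : ∀ x : Fin (K * N + 1) → ℂ,
      star x ⬝ᵥ u0 = ∑ k ∈ T0, (starRingEnd ℂ) (x (e k)) * c k := by
    intro x
    have h2 := sum_reduce_aux T0 e he0 (fun q => (starRingEnd ℂ) (x q)) c
    simp_rw [← hu0] at h2
    rw [← h2]
    simp [dotProduct, Pi.star_apply, RCLike.star_def]
  have hdot1 : ∀ x : Fin (K * N + 1) → ℂ,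
      star x ⬝ᵥ u1 = ∑ k ∈ T1, (starRingEnd ℂ) (x (e k)) * c k := by
    intro x
    have h2 := sum_reduce_aux T1 e he1 (fun q => (starRingEnd ℂ) (x q)) c
    simp_rw [← hu1] at h2
    rw [← h2]
    simp [dotProduct, Pi.star_apply, RCLike.star_def]
  have hconj : ∀ z : ℂ, (starRingEnd ℂ) z * z = ((‖z‖ ^ 2 : ℝ) : ℂ) := fun z => by
    rw [mul_comm, Complex.mul_conj, Complex.normSq_eq_norm_sq]
  have hdisj0 : ∀ k ∈ T0, k ∉ T1 := by
    intro k hk hk1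
    have h1 := (Finset.mem_filter.mp hk).2
    have h2 := (Finset.mem_filter.mp hk1).2
    exact (Nat.not_odd_iff_even.mpr h1) h2
  have hdisj1 : ∀ k ∈ T1, k ∉ T0 := by
    intro k hk hk0
    exact hdisj0 k hk0 hk
  have dot00 : star u0 ⬝ᵥ u0 = 1 := by
    rw [hdot0 u0]
    calc ∑ k ∈ T0, (starRingEnd ℂ) (u0 (e k)) * c k
        = ∑ k ∈ T0, ((‖c k‖ ^ 2 : ℝ) : ℂ) := by
          refine Finset.sum_congr rfl fun k hk => ?_
          rw [hu0e k (hT0sub k hk), if_pos hk, hconj]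
      _ = ((∑ k ∈ T0, ‖c k‖ ^ 2 : ℝ) : ℂ) := by push_cast; rfl
      _ = 1 := by rw [hT0] at *; rw [hnorm0]; norm_num
  have dot11 : star u1 ⬝ᵥ u1 = 1 := by
    rw [hdot1 u1]
    calc ∑ k ∈ T1, (starRingEnd ℂ) (u1 (e k)) * c k
        = ∑ k ∈ T1, ((‖c k‖ ^ 2 : ℝ) : ℂ) := by
          refine Finset.sum_congr rfl fun k hk => ?_
          rw [hu1e k (hT1sub k hk), if_pos hk, hconj]
      _ = ((∑ k ∈ T1, ‖c k‖ ^ 2 : ℝ) : ℂ) := by push_cast; rfl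
      _ = 1 := by rw [hT1] at *; rw [hnorm1]; norm_num
  have dot10 : star u1 ⬝ᵥ u0 = 0 := by
    rw [hdot0 u1]
    refine Finset.sum_eq_zero fun k hk => ?_
    rw [hu1e k (hT0sub k hk), if_neg (hdisj0 k hk)]
    simp
  have dot01 : star u0 ⬝ᵥ u1 = 0 := by
    rw [hdot1 u0]
    refine Finset.sum_eq_zero fun k hk => ?_
    rw [hu0e k (hT1sub k hk), if_neg (hdisj1 k hk)]
    simp
  -- rank-one matrices acting on vectors
  have hvv : ∀ x y w : Fin (K * N + 1) → ℂ,
      (Matrix.vecMulVec x y).mulVec w = (y ⬝ᵥ w) • x := by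
    intro x y w
    funext q
    have h1 : (Matrix.vecMulVec x y).mulVec w q = ∑ r, (x q * y r) * w r := by
      simp [Matrix.mulVec, dotProduct, Matrix.vecMulVec_apply]
    rw [h1, Pi.smul_apply, smul_eq_mul, dotProduct, Finset.sum_mul]
    exact Finset.sum_congr rfl fun r _ => by ring
  have hPu0 : P.mulVec u0 = u0 := by
    rw [hP, Matrix.add_mulVec, hvv, hvv, dot00, dot10]
    simp
  have hPu1 : P.mulVec u1 = u1 := by
    rw [hP, Matrix.add_mulVec, hvv, hvv, dot01, dot11]
    simp
  -- eigenvalue decomposition on the codespace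
  set ac : ℂ := (starRingEnd ℂ) α with hac
  have hacne : ac ≠ 0 := by
    rw [hac]
    simpa using hα
  set t : ℂ := 1 + α * ac with htdef
  have ht : t ≠ 0 := by
    rw [htdef, hac, Complex.mul_conj]
    intro h
    have h2 : (1 + Complex.normSq α : ℝ) = 0 := by
      have := congrArg Complex.re h
      simpa using this
    nlinarith [Complex.normSq_nonneg α]
  have hcomb0 : ψ + α • ψ' = t • u0 := by
    funext q
    rw [hψ, hψ']
    simp only [Pi.add_apply, Pi.smul_apply, Pi.sub_apply, smul_eq_mul, htdef, hac]
    ring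
  have hcomb1 : ac • ψ - ψ' = t • u1 := by
    funext q
    rw [hψ, hψ']
    simp only [Pi.add_apply, Pi.smul_apply, Pi.sub_apply, smul_eq_mul, htdef, hac]
    ring
  have hHu0 : t • H.mulVec u0 = lam • ψ + (α * lam') • ψ' := by
    calc t • H.mulVec u0 = H.mulVec (t • u0) := (Matrix.mulVec_smul H t u0).symm
      _ = H.mulVec ψ + α • H.mulVec ψ' := by rw [← hcomb0, Matrix.mulVec_add, Matrix.mulVec_smul]
      _ = lam • ψ + (α * lam') • ψ' := by rw [hHψ, hHψ', smul_smul]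
  have hHu1 : t • H.mulVec u1 = (ac * lam) • ψ - lam' • ψ' := by
    calc t • H.mulVec u1 = H.mulVec (t • u1) := (Matrix.mulVec_smul H t u1).symm
      _ = ac • H.mulVec ψ - H.mulVec ψ' := by rw [← hcomb1, Matrix.mulVec_sub, Matrix.mulVec_smul]
      _ = (ac * lam) • ψ - lam' • ψ' := by rw [hHψ, hHψ', smul_smul]
  have hPψ : P.mulVec ψ = ψ := by
    rw [hψ, Matrix.mulVec_add, Matrix.mulVec_smul, hPu0, hPu1]
  have hPψ' : P.mulVec ψ' = ψ' := by
    rw [hψ', Matrix.mulVec_sub, Matrix.mulVec_smul, hPu0, hPu1]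
  have hPHu0 : P.mulVec (H.mulVec u0) = H.mulVec u0 := by
    refine smul_right_injective (Fin (K * N + 1) → ℂ) ht ?_
    show t • P.mulVec (H.mulVec u0) = t • H.mulVec u0
    rw [← Matrix.mulVec_smul, hHu0, Matrix.mulVec_add, Matrix.mulVec_smul, Matrix.mulVec_smul,
      hPψ, hPψ', ← hHu0]
  have hPHu1 : P.mulVec (H.mulVec u1) = H.mulVec u1 := by
    refine smul_right_injective (Fin (K * N + 1) → ℂ) ht ?_
    show t • P.mulVec (H.mulVec u1) = t • H.mulVec u1
    rw [← Matrix.mulVec_smul, hHu1, Matrix.mulVec_sub, Matrix.mulVec_smul, Matrix.mulVec_smul,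
      hPψ, hPψ', ← hHu1]
  have heK : e K = lastI := Fin.ext (by rw [heval K le_rfl, hlastval])
  have hll' : lam - lam' ≠ 0 := sub_ne_zero.mpr hll
  have hcK : c K ≠ 0 := hc K le_rfl
  -- split on the parity of K
  rcases Nat.even_or_odd K with hKpar | hKpar
  · -- K even : use u1
    have hKT0 : K ∈ T0 := Finset.mem_filter.mpr ⟨Finset.mem_range.mpr (by omega), hKpar⟩
    have hKT1 : K ∉ T1 := hdisj0 K hKT0
    have hu0last : u0 lastI = c K := by
      rw [← heK, hu0e K le_rfl, if_pos hKT0]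
    have hu1last : u1 lastI = 0 := by
      rw [← heK, hu1e K le_rfl, if_neg hKT1]
    have hψlast : ψ lastI = c K := by
      rw [hψ]
      simp [hu0last, hu1last]
    have hψ'last : ψ' lastI = ac * c K := by
      rw [hψ']
      simp [hu0last, hu1last, hac]
    have h9 := congrFun hHu1 lastI
    simp only [Pi.smul_apply, Pi.sub_apply, smul_eq_mul, hψlast, hψ'last] at h9
    have hκ : (H.mulVec u1) lastI ≠ 0 := by
      intro h
      rw [h, mul_zero] at h9
      have h10 : ac * (lam - lam') * c K = 0 := by linear_combination (-1 : ℂ) * h9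
      exact (mul_ne_zero (mul_ne_zero hacne hll') hcK) h10
    have hTf : ∀ k ∈ T1, k < K ∧ (K - k) % 2 = 1 := by
      intro k hk
      have h1 := hT1sub k hk
      have h2 := Nat.odd_iff.mp (Finset.mem_filter.mp hk).2
      have h3 := Nat.even_iff.mp hKpar
      constructor
      · rcases Nat.lt_or_ge k K with h | h
        · exact h
        · exfalso; omega
      · omega
    exact main_aux N K l hN c A D P H hA hD Eset hEset V hV hET u1 T1 hTf hu1 hPu1 _ hκ
      (by rw [hPHu1])
  · -- K odd : use u0
    have hKT1 : K ∈ T1 := Finset.mem_filter.mpr ⟨Finset.mem_range.mpr (by omega), hKpar⟩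
    have hKT0 : K ∉ T0 := hdisj1 K hKT1
    have hu0last : u0 lastI = 0 := by
      rw [← heK, hu0e K le_rfl, if_neg hKT0]
    have hu1last : u1 lastI = c K := by
      rw [← heK, hu1e K le_rfl, if_pos hKT1]
    have hψlast : ψ lastI = α * c K := by
      rw [hψ]
      simp [hu0last, hu1last]
    have hψ'last : ψ' lastI = -c K := by
      rw [hψ']
      simp [hu0last, hu1last, hac]
    have h9 := congrFun hHu0 lastI
    simp only [Pi.smul_apply, Pi.add_apply, smul_eq_mul, hψlast, hψ'last] at h9
    have hκ : (H.mulVec u0) lastI ≠ 0 := by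
      intro h
      rw [h, mul_zero] at h9
      have h10 : α * (lam - lam') * c K = 0 := by linear_combination (-1 : ℂ) * h9
      exact (mul_ne_zero (mul_ne_zero hα hll') hcK) h10
    have hTf : ∀ k ∈ T0, k < K ∧ (K - k) % 2 = 1 := by
      intro k hk
      have h1 := hT0sub k hk
      have h2 := Nat.even_iff.mp (Finset.mem_filter.mp hk).2
      have h3 := Nat.odd_iff.mp hKpar
      constructor
      · rcases Nat.lt_or_ge k K with h | h
        · exact h
        · exfalso; omega
      · omega
    exact main_aux N K l hN c A D P H hA hD Eset hEset V hV hET u0 T0 hTf hu0 hPu0 _ hκ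
      (by rw [hPHu0])
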